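/- Let G be a graph on n vertices with no induced 4-cycle and no clique on 6 vertices. Then G has at most (5/√2)·n^{3/2} edges. -/

import Mathlib

set_option linter.unusedSectionVars false
set_option maxHeartbeats 1000000

open Finset

section Aux
variable {V : Type*} [Fintype V] [DecidableEq V] (G : SimpleGraph V) [DecidableRel G.Adj]

lemma aux_clique_card (hK6 : G.CliqueFree 6) {s : Finset V} (hs : G.IsClique (s : Set V)) :
    s.card ≤ 5 := by
  by_contra h
  push_neg at h
  obtain ⟨t, hts, ht⟩ := Finset.exists_subset_card_eq (show 6 ≤ s.card from h)
  exact hK6 t ⟨hs.subset (Finset.coe_subset.mpr hts), ht⟩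

lemma aux_codeg
    (hC4 : ¬ ∃ a b c d : V, G.Adj a b ∧ G.Adj b c ∧ G.Adj c d ∧ G.Adj d a ∧
      ¬ G.Adj a c ∧ ¬ G.Adj b d ∧ a ≠ c ∧ b ≠ d)
    (hK6 : G.CliqueFree 6) {x y : V} (hxy : x ≠ y) (hnadj : ¬ G.Adj x y) :
    (G.neighborFinset x ∩ G.neighborFinset y).card ≤ 4 := by
  set S := G.neighborFinset x ∩ G.neighborFinset y with hS
  have hclique : G.IsClique ((insert x S : Finset V) : Set V) := by
    intro a ha b hb hab
    simp only [Finset.coe_insert, Set.mem_insert_iff, Finset.mem_coe, hS, Finset.mem_inter,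
      SimpleGraph.mem_neighborFinset] at ha hb
    rcases ha with rfl | ⟨hax, hay⟩
    · rcases hb with rfl | ⟨hbx, hby⟩
      · exact absurd rfl hab
      · exact hbx
    · rcases hb with rfl | ⟨hbx, hby⟩
      · exact hax.symm
      · by_contra hnab
        exact hC4 ⟨x, a, y, b, hax, hay.symm, hby, hbx.symm, hnadj, hnab, hxy, hab⟩
  have hxS : x ∉ S := by
    simp [hS, SimpleGraph.mem_neighborFinset]
  have := aux_clique_card G hK6 hclique
  rw [Finset.card_insert_of_notMem hxS] at this
  omega

lemma aux_local (hK6 : G.CliqueFree 6) (v : V) :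
    G.degree v * (G.degree v - 1) ≤
      10 * (Finset.univ.filter (fun p : V × V =>
        G.Adj v p.1 ∧ G.Adj v p.2 ∧ ¬ G.Adj p.1 p.2 ∧ p.1 ≠ p.2)).card + 20 := by
  set s := G.degree v with hs
  set N := G.neighborFinset v with hN
  set Q := Finset.univ.filter (fun p : V × V =>
        G.Adj v p.1 ∧ G.Adj v p.2 ∧ ¬ G.Adj p.1 p.2 ∧ p.1 ≠ p.2) with hQ
  by_cases hs4 : s ≤ 4
  · have : s * (s - 1) ≤ 4 * 3 := Nat.mul_le_mul hs4 (by omega)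
    omega
  push_neg at hs4
  have hs5 : 5 ≤ s := hs4
  -- the incidence set
  set U : Finset (Finset V × (V × V)) :=
    ((N.powersetCard 5) ×ˢ Q).filter (fun tp => tp.2.1 ∈ tp.1 ∧ tp.2.2 ∈ tp.1) with hU
  have hNcard : N.card = s := G.card_neighborFinset_eq_degree v
  -- lower bound on U.card
  have hlow : 2 * s.choose 5 ≤ U.card := by
    have hmaps : ∀ tp ∈ U, tp.1 ∈ N.powersetCard 5 := by
      intro tp htp
      rw [hU, Finset.mem_filter, Finset.mem_product] at htp
      exact htp.1.1
    rw [Finset.card_eq_sum_card_fiberwise hmaps]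
    have : ∀ T ∈ N.powersetCard 5, 2 ≤ (U.filter (fun tp => tp.1 = T)).card := by
      intro T hT
      rw [Finset.mem_powersetCard] at hT
      obtain ⟨hTN, hT5⟩ := hT
      -- T is not a clique
      have hnc : ¬ G.IsClique (T : Set V) := by
        intro hcl
        have hvT : v ∉ T := fun hv => G.irrefl (by
          have := hTN hv; rwa [hN, SimpleGraph.mem_neighborFinset] at this)
        have hcl' : G.IsClique ((insert v T : Finset V) : Set V) := by
          intro a ha b hb hab
          simp only [Finset.coe_insert, Set.mem_insert_iff, Finset.mem_coe] at ha hb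
          rcases ha with rfl | ha
          · rcases hb with rfl | hb
            · exact absurd rfl hab
            · have := hTN hb; rwa [hN, SimpleGraph.mem_neighborFinset] at this
          · rcases hb with rfl | hb
            · have := hTN ha; rw [hN, SimpleGraph.mem_neighborFinset] at this
              exact this.symm
            · exact hcl ha hb hab
        exact hK6 (insert v T) ⟨hcl', by rw [Finset.card_insert_of_notMem hvT, hT5]⟩
      rw [SimpleGraph.isClique_iff, Set.Pairwise] at hnc
      push_neg at hnc
      obtain ⟨x, hx, y, hy, hxy, hnxy⟩ := hnc
      rw [Finset.mem_coe] at hx hy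
      have hxN : G.Adj v x := by
        have := hTN hx; rwa [hN, SimpleGraph.mem_neighborFinset] at this
      have hyN : G.Adj v y := by
        have := hTN hy; rwa [hN, SimpleGraph.mem_neighborFinset] at this
      have hmem1 : (T, (x, y)) ∈ U.filter (fun tp => tp.1 = T) := by
        rw [Finset.mem_filter, hU, Finset.mem_filter, Finset.mem_product]
        refine ⟨⟨⟨by rw [Finset.mem_powersetCard]; exact ⟨hTN, hT5⟩, ?_⟩, hx, hy⟩, rfl⟩
        rw [hQ, Finset.mem_filter]
        exact ⟨Finset.mem_univ _, hxN, hyN, hnxy, hxy⟩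
      have hmem2 : (T, (y, x)) ∈ U.filter (fun tp => tp.1 = T) := by
        rw [Finset.mem_filter, hU, Finset.mem_filter, Finset.mem_product]
        refine ⟨⟨⟨by rw [Finset.mem_powersetCard]; exact ⟨hTN, hT5⟩, ?_⟩, hy, hx⟩, rfl⟩
        rw [hQ, Finset.mem_filter]
        exact ⟨Finset.mem_univ _, hyN, hxN, fun h => hnxy h.symm, hxy.symm⟩
      have hsub : ({(T, (x, y)), (T, (y, x))} : Finset (Finset V × (V × V))) ⊆
          U.filter (fun tp => tp.1 = T) := by
        intro z hz
        rw [Finset.mem_insert, Finset.mem_singleton] at hz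
        rcases hz with rfl | rfl
        · exact hmem1
        · exact hmem2
      have hcard2 : ({(T, (x, y)), (T, (y, x))} : Finset (Finset V × (V × V))).card = 2 := by
        rw [Finset.card_insert_of_notMem (by simp [Prod.ext_iff, hxy]), Finset.card_singleton]
      calc 2 = ({(T, (x, y)), (T, (y, x))} : Finset (Finset V × (V × V))).card := hcard2.symm
        _ ≤ _ := Finset.card_le_card hsub
    calc 2 * s.choose 5 = (N.powersetCard 5).card * 2 := by
          rw [Finset.card_powersetCard, hNcard, Nat.mul_comm]
      _ = ∑ _T ∈ N.powersetCard 5, 2 := by rw [Finset.sum_const, smul_eq_mul]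
      _ ≤ _ := Finset.sum_le_sum this
  -- upper bound on U.card
  have hup : U.card ≤ Q.card * (s - 2).choose 3 := by
    have hmaps : ∀ tp ∈ U, tp.2 ∈ Q := by
      intro tp htp
      rw [hU, Finset.mem_filter, Finset.mem_product] at htp
      exact htp.1.2
    rw [Finset.card_eq_sum_card_fiberwise hmaps]
    have hfib : ∀ p ∈ Q, (U.filter (fun tp => tp.2 = p)).card ≤ (s - 2).choose 3 := by
      intro p hp
      rw [hQ, Finset.mem_filter] at hp
      obtain ⟨-, hp1, hp2, hpn, hpne⟩ := hp
      have hp1N : p.1 ∈ N := by rw [hN, SimpleGraph.mem_neighborFinset]; exact hp1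
      have hp2N : p.2 ∈ N := by rw [hN, SimpleGraph.mem_neighborFinset]; exact hp2
      have htarget : (((N.erase p.1).erase p.2).powersetCard 3).card = (s - 2).choose 3 := by
        rw [Finset.card_powersetCard, Finset.card_erase_of_mem
          (Finset.mem_erase.mpr ⟨hpne.symm, hp2N⟩), Finset.card_erase_of_mem hp1N, hNcard]
        congr 1
      rw [← htarget]
      apply Finset.card_le_card_of_injOn (fun tp => tp.1 \ {p.1, p.2})
      · intro tp htp
        rw [Finset.mem_coe, Finset.mem_filter] at htp
        obtain ⟨htpU, htp2⟩ := htp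
        rw [hU, Finset.mem_filter, Finset.mem_product] at htpU
        obtain ⟨⟨hT, -⟩, hm1, hm2⟩ := htpU
        rw [Finset.mem_powersetCard] at hT
        rw [Finset.mem_coe, Finset.mem_powersetCard]
        constructor
        · intro a ha
          rw [Finset.mem_sdiff, Finset.mem_insert, Finset.mem_singleton] at ha
          push_neg at ha
          exact Finset.mem_erase.mpr ⟨ha.2.2, Finset.mem_erase.mpr ⟨ha.2.1, hT.1 ha.1⟩⟩
        · rw [Finset.card_sdiff_of_subset (by
            intro a ha
            rw [Finset.mem_insert, Finset.mem_singleton] at ha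
            rw [htp2] at hm1 hm2
            rcases ha with rfl | rfl
            · exact hm1
            · exact hm2)]
          rw [hT.2, Finset.card_insert_of_notMem (by simp [hpne]), Finset.card_singleton]
      · intro tp1 h1 tp2 h2 heq
        rw [Finset.mem_coe, Finset.mem_filter] at h1 h2
        have hsub1 : ({p.1, p.2} : Finset V) ⊆ tp1.1 := by
          intro a ha
          rw [Finset.mem_insert, Finset.mem_singleton] at ha
          rw [hU, Finset.mem_filter] at h1
          rcases ha with rfl | rfl
          · rw [← h1.2]; exact h1.1.2.1
          · rw [← h1.2]; exact h1.1.2.2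
        have hsub2 : ({p.1, p.2} : Finset V) ⊆ tp2.1 := by
          intro a ha
          rw [Finset.mem_insert, Finset.mem_singleton] at ha
          rw [hU, Finset.mem_filter] at h2
          rcases ha with rfl | rfl
          · rw [← h2.2]; exact h2.1.2.1
          · rw [← h2.2]; exact h2.1.2.2
        dsimp only at heq
        have : tp1.1 = tp2.1 := by
          rw [← Finset.sdiff_union_of_subset hsub1, ← Finset.sdiff_union_of_subset hsub2, heq]
        exact Prod.ext this (h1.2.trans h2.2.symm)
    calc ∑ p ∈ Q, (U.filter (fun tp => tp.2 = p)).card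
        ≤ ∑ _p ∈ Q, (s - 2).choose 3 := Finset.sum_le_sum hfib
      _ = Q.card * (s - 2).choose 3 := by rw [Finset.sum_const, smul_eq_mul]
  -- combine with the choose identity
  have hid : s.choose 5 * (Nat.choose 5 2) = s.choose 2 * (s - 2).choose 3 :=
    Nat.choose_mul (n := s) (k := 5) (s := 2) (by norm_num)
  have h52 : Nat.choose 5 2 = 10 := by decide
  have hpos : 0 < (s - 2).choose 3 := Nat.choose_pos (by omega)
  have hmain : 2 * s.choose 2 ≤ 10 * Q.card := by
    have h1 : 2 * s.choose 5 * 10 ≤ Q.card * (s - 2).choose 3 * 10 :=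
      Nat.mul_le_mul_right 10 (le_trans hlow hup)
    have h2 : 2 * s.choose 5 * 10 = 2 * s.choose 2 * (s - 2).choose 3 := by
      rw [Nat.mul_assoc, ← h52, hid]; ring
    have h3 : 2 * s.choose 2 * (s - 2).choose 3 ≤ 10 * Q.card * (s - 2).choose 3 := by
      rw [← h2]; calc 2 * s.choose 5 * 10 ≤ Q.card * (s - 2).choose 3 * 10 := h1
        _ = 10 * Q.card * (s - 2).choose 3 := by ring
    exact Nat.le_of_mul_le_mul_right h3 hpos
  have htwo : 2 * s.choose 2 = s * (s - 1) := by
    rw [Nat.choose_two_right]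
    have : Even (s * (s - 1)) := by
      rcases Nat.even_or_odd s with h | h
      · exact h.mul_right _
      · exact (Nat.Odd.sub_odd h odd_one).mul_left _
    obtain ⟨k, hk⟩ := this
    omega
  omega

lemma aux_global
    (hC4 : ¬ ∃ a b c d : V, G.Adj a b ∧ G.Adj b c ∧ G.Adj c d ∧ G.Adj d a ∧
      ¬ G.Adj a c ∧ ¬ G.Adj b d ∧ a ≠ c ∧ b ≠ d)
    (hK6 : G.CliqueFree 6) :
    ∑ v : V, G.degree v * (G.degree v - 1) ≤
      40 * (Fintype.card V) ^ 2 + 20 * Fintype.card V := by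
  have hQsum : ∑ v : V, (Finset.univ.filter (fun p : V × V =>
      G.Adj v p.1 ∧ G.Adj v p.2 ∧ ¬ G.Adj p.1 p.2 ∧ p.1 ≠ p.2)).card
      ≤ 4 * (Fintype.card V) ^ 2 := by
    have hswap : ∑ v : V, (Finset.univ.filter (fun p : V × V =>
        G.Adj v p.1 ∧ G.Adj v p.2 ∧ ¬ G.Adj p.1 p.2 ∧ p.1 ≠ p.2)).card
        = ∑ p : V × V, (Finset.univ.filter (fun v : V =>
        G.Adj v p.1 ∧ G.Adj v p.2 ∧ ¬ G.Adj p.1 p.2 ∧ p.1 ≠ p.2)).card := by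
      simp only [Finset.card_filter]
      exact Finset.sum_comm
    rw [hswap]
    have hfib : ∀ p : V × V, (Finset.univ.filter (fun v : V =>
        G.Adj v p.1 ∧ G.Adj v p.2 ∧ ¬ G.Adj p.1 p.2 ∧ p.1 ≠ p.2)).card ≤ 4 := by
      intro p
      by_cases h : ¬ G.Adj p.1 p.2 ∧ p.1 ≠ p.2
      · refine le_trans (Finset.card_le_card ?_) (aux_codeg G hC4 hK6 h.2 h.1)
        intro v hv
        rw [Finset.mem_filter] at hv
        rw [Finset.mem_inter, SimpleGraph.mem_neighborFinset, SimpleGraph.mem_neighborFinset]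
        exact ⟨hv.2.1.symm, hv.2.2.1.symm⟩
      · have : (Finset.univ.filter (fun v : V =>
            G.Adj v p.1 ∧ G.Adj v p.2 ∧ ¬ G.Adj p.1 p.2 ∧ p.1 ≠ p.2)) = ∅ := by
          rw [Finset.eq_empty_iff_forall_notMem]
          intro v hv
          rw [Finset.mem_filter] at hv
          exact h ⟨hv.2.2.2.1, hv.2.2.2.2⟩
        rw [this]
        simp
    calc ∑ p : V × V, (Finset.univ.filter (fun v : V =>
          G.Adj v p.1 ∧ G.Adj v p.2 ∧ ¬ G.Adj p.1 p.2 ∧ p.1 ≠ p.2)).card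
        ≤ ∑ _p : V × V, 4 := Finset.sum_le_sum (fun p _ => hfib p)
      _ = 4 * (Fintype.card V) ^ 2 := by
          rw [Finset.sum_const, smul_eq_mul, Finset.card_univ, Fintype.card_prod]
          ring
  calc ∑ v : V, G.degree v * (G.degree v - 1)
      ≤ ∑ v : V, (10 * (Finset.univ.filter (fun p : V × V =>
        G.Adj v p.1 ∧ G.Adj v p.2 ∧ ¬ G.Adj p.1 p.2 ∧ p.1 ≠ p.2)).card + 20) :=
        Finset.sum_le_sum (fun v _ => aux_local G hK6 v)
    _ = 10 * (∑ v : V, (Finset.univ.filter (fun p : V × V =>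
        G.Adj v p.1 ∧ G.Adj v p.2 ∧ ¬ G.Adj p.1 p.2 ∧ p.1 ≠ p.2)).card) + 20 * Fintype.card V := by
        rw [Finset.sum_add_distrib, Finset.sum_const, ← Finset.mul_sum, smul_eq_mul,
          Finset.card_univ, Nat.mul_comm 20]
    _ ≤ 10 * (4 * (Fintype.card V) ^ 2) + 20 * Fintype.card V := by
        have := Nat.mul_le_mul_left 10 hQsum
        omega
    _ = 40 * (Fintype.card V) ^ 2 + 20 * Fintype.card V := by ring

theorem edge_bound_of_no_induced_C4_cliqueFree'
    (hC4 : ¬ ∃ a b c d : V, G.Adj a b ∧ G.Adj b c ∧ G.Adj c d ∧ G.Adj d a ∧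
      ¬ G.Adj a c ∧ ¬ G.Adj b d ∧ a ≠ c ∧ b ≠ d)
    (hK6 : G.CliqueFree 6) :
    (G.edgeFinset.card : ℝ) ≤
      5 / Real.sqrt 2 * (Fintype.card V : ℝ) ^ (3 / 2 : ℝ) := by
  set n := Fintype.card V with hn
  set m := G.edgeFinset.card with hm
  have hdeg : ∑ v : V, G.degree v = 2 * m := G.sum_degrees_eq_twice_card_edges
  have hglob := aux_global G hC4 hK6
  -- m ≤ n² / 2 in ℕ form: 2 * m ≤ n * n
  have hm2 : 2 * m ≤ n * n := by
    have h1 : m ≤ n.choose 2 := G.card_edgeFinset_le_card_choose_two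
    have h2 : n.choose 2 = n * (n - 1) / 2 := Nat.choose_two_right n
    have h3 : Even (n * (n - 1)) := by
      rcases Nat.even_or_odd n with h | h
      · exact h.mul_right _
      · exact ((Nat.Odd.sub_odd h odd_one)).mul_left _
    obtain ⟨k, hk⟩ := h3
    have h4 : n * (n - 1) ≤ n * n := Nat.mul_le_mul_left n (Nat.sub_le n 1)
    omega
  -- key real inequality: 4 m² ≤ 50 n³ when n ≥ 3
  have hsq : ∀ v : V, ((G.degree v : ℝ)) ^ 2
      = ((G.degree v * (G.degree v - 1) + G.degree v : ℕ) : ℝ) := by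
    intro v
    have hgen : ∀ d : ℕ, d * d = d * (d - 1) + d := by
      intro d
      cases d with
      | zero => rfl
      | succ k => simp [Nat.mul_succ]
    have : G.degree v * G.degree v = G.degree v * (G.degree v - 1) + G.degree v := hgen _
    push_cast [← this]
    ring
  have hcauchy : (∑ v : V, (G.degree v : ℝ)) ^ 2 ≤ (n : ℝ) * ∑ v : V, (G.degree v : ℝ) ^ 2 := by
    have := sq_sum_le_card_mul_sum_sq (s := (Finset.univ : Finset V))
      (f := fun v => (G.degree v : ℝ))
    simpa [hn, Finset.card_univ] using this
  have hsum1 : (∑ v : V, (G.degree v : ℝ)) = 2 * m := by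
    rw [← Nat.cast_sum]
    exact_mod_cast congrArg (Nat.cast : ℕ → ℝ) hdeg
  have hsum2 : (∑ v : V, (G.degree v : ℝ) ^ 2) ≤ 40 * (n:ℝ)^2 + 20 * n + 2 * m := by
    calc (∑ v : V, (G.degree v : ℝ) ^ 2)
        = ((∑ v : V, (G.degree v * (G.degree v - 1) + G.degree v) : ℕ) : ℝ) := by
          rw [Nat.cast_sum]
          exact Finset.sum_congr rfl (fun v _ => hsq v)
      _ = ((∑ v : V, G.degree v * (G.degree v - 1) : ℕ) : ℝ) + ((∑ v : V, G.degree v : ℕ) : ℝ) := by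
          rw [← Nat.cast_add, Finset.sum_add_distrib]
      _ ≤ (40 * (n:ℝ)^2 + 20 * n) + 2 * m := by
          have g1 : ((∑ v : V, G.degree v * (G.degree v - 1) : ℕ) : ℝ)
              ≤ 40 * (n:ℝ)^2 + 20 * n := by exact_mod_cast Nat.cast_le.mpr hglob
          have g2 : ((∑ v : V, G.degree v : ℕ) : ℝ) = 2 * m := hsum1.symm ▸ by
            rw [← Nat.cast_sum]
          linarith [g1]
      _ = 40 * (n:ℝ)^2 + 20 * n + 2 * m := by ring
  -- the bound 4 m² ≤ 50 n³ (real), all n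
  have hkey : 4 * (m:ℝ)^2 ≤ 50 * (n:ℝ)^3 := by
    by_cases hn3 : 3 ≤ n
    · have h1 : (2 * (m:ℝ))^2 ≤ (n:ℝ) * (40 * (n:ℝ)^2 + 20 * n + 2 * m) := by
        calc (2 * (m:ℝ))^2 = (∑ v : V, (G.degree v : ℝ))^2 := by rw [hsum1]
          _ ≤ (n : ℝ) * ∑ v : V, (G.degree v : ℝ) ^ 2 := hcauchy
          _ ≤ (n : ℝ) * (40 * (n:ℝ)^2 + 20 * n + 2 * m) := by
              have : (0:ℝ) ≤ n := Nat.cast_nonneg n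
              nlinarith [hsum2]
      have h2 : 2 * (m:ℝ) ≤ (n:ℝ) * n := by exact_mod_cast Nat.cast_le.mpr hm2
      have h3 : (3:ℝ) ≤ n := by exact_mod_cast hn3
      nlinarith [h1, h2, h3, Nat.cast_nonneg (α := ℝ) m]
    · push_neg at hn3
      interval_cases n
      · have : m = 0 := by omega
        simp [this]
      · have : m = 0 := by omega
        have h0 : (m:ℝ) = 0 := by exact_mod_cast this
        rw [h0]; norm_num
      · have : m ≤ 2 := by omega
        have h0 : (m:ℝ) ≤ 2 := by exact_mod_cast this
        have h1 : (0:ℝ) ≤ m := Nat.cast_nonneg m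
        norm_num
        nlinarith [h0, h1]
  -- finish
  have hs2 : Real.sqrt 2 ^ 2 = 2 := Real.sq_sqrt (by norm_num)
  have hs2pos : (0:ℝ) < Real.sqrt 2 := Real.sqrt_pos.mpr (by norm_num)
  have hpow : ((n:ℝ) ^ (3/2 : ℝ)) ^ 2 = (n:ℝ) ^ 3 := by
    rw [← Real.rpow_natCast ((n:ℝ) ^ (3/2 : ℝ)) 2, ← Real.rpow_mul (Nat.cast_nonneg n),
      ← Real.rpow_natCast (n:ℝ) 3]
    norm_num
  set B : ℝ := 5 / Real.sqrt 2 * (n : ℝ) ^ (3/2 : ℝ) with hB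
  have hBnonneg : 0 ≤ B := by positivity
  have hB2 : 4 * B^2 = 50 * (n:ℝ)^3 := by
    rw [hB, mul_pow, div_pow, hs2, hpow]
    ring
  by_contra hlt
  push_neg at hlt
  have : B^2 < (m:ℝ)^2 := by
    apply pow_lt_pow_left₀ hlt hBnonneg
    norm_num
  linarith [hkey, hB2, this]

end Aux

/-- Gyárfás–Hubenko–Solymosi bound: a graph on `n` vertices with no induced
4-cycle and no clique on 6 vertices has at most `(5/√2)·n^{3/2}` edges. -/
theorem edge_bound_of_no_induced_C4_cliqueFree
    {V : Type*} [Fintype V] [DecidableEq V]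
    (G : SimpleGraph V) [DecidableRel G.Adj]
    (hC4 : ¬ ∃ a b c d : V, G.Adj a b ∧ G.Adj b c ∧ G.Adj c d ∧ G.Adj d a ∧
      ¬ G.Adj a c ∧ ¬ G.Adj b d ∧ a ≠ c ∧ b ≠ d)
    (hK6 : G.CliqueFree 6) :
    (G.edgeFinset.card : ℝ) ≤
      5 / Real.sqrt 2 * (Fintype.card V : ℝ) ^ (3 / 2 : ℝ) := by
  exact edge_bound_of_no_induced_C4_cliqueFree' G hC4 hK6
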